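/- Let Ω ⊆ ℝⁿ be open, γ ∈ (0,n), and μ a Borel measure on Ω satisfying μ(B_r(x) ∩ Ω) ≤ C_μ r^α for all x ∈ Ω, r > 0, with α ∈ (n−γ, n]. Define N_γ g(x) = ∫_{∂Ω} g(y)/|x−y|^{n−γ} dH^{n−1}(y). Then there is a constant C = C(n,α,γ,C_μ) such that sup_{t>0} t · μ({x ∈ Ω : |N_γ g(x)| > t})^{(n−γ)/α} ≤ C ∫_{∂Ω} |g| dH^{n−1} for every g ∈ L¹(∂Ω, H^{n−1}). -/

import Mathlib

open Set MeasureTheory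
open scoped ENNReal NNReal

set_option linter.unusedVariables false
set_option linter.unusedSectionVars false
set_option linter.unusedTactic false

section WeakTypeAux

lemma ennreal_rpow_anti {u v : ℝ≥0∞} {β : ℝ} (hβ : 0 ≤ β) (h : u ≤ v) :
    v ^ (-β) ≤ u ^ (-β) := by
  rw [ENNReal.rpow_neg, ENNReal.rpow_neg]
  exact ENNReal.inv_le_inv.mpr (ENNReal.rpow_le_rpow h hβ)

lemma exists_dyadic {r e : ℝ} (he : 0 < e) (her : e < r) :
    ∃ j : ℕ, r * 2 ^ (-(j:ℝ) - 1) ≤ e ∧ e < r * 2 ^ (-(j:ℝ)) := by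
  classical
  have hr : 0 < r := he.trans her
  have h2 : ∀ m : ℕ, (2:ℝ) ^ (-(m:ℝ)) = (1/2) ^ m := by
    intro m
    rw [Real.rpow_neg (by norm_num), Real.rpow_natCast, one_div, inv_pow]
  obtain ⟨k, hk⟩ := exists_pow_lt_of_lt_one (div_pos he hr) (by norm_num : (1/2:ℝ) < 1)
  have hex : ∃ m : ℕ, r * 2 ^ (-(m:ℝ)) ≤ e := by
    refine ⟨k, ?_⟩
    rw [h2]
    have := (lt_div_iff₀ hr).mp hk
    linarith
  have hk₀ : r * 2 ^ (-(Nat.find hex : ℝ)) ≤ e := Nat.find_spec hex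
  have hk₀0 : Nat.find hex ≠ 0 := by
    intro h0
    rw [h0] at hk₀
    simp only [Nat.cast_zero, neg_zero, Real.rpow_zero, mul_one] at hk₀
    exact absurd hk₀ (not_le.mpr her)
  obtain ⟨j, hj⟩ := Nat.exists_eq_succ_of_ne_zero hk₀0
  refine ⟨j, ?_, ?_⟩
  · rw [hj] at hk₀
    convert hk₀ using 3
    push_cast
    ring
  · have := Nat.find_min hex (m := j) (by omega)
    exact not_le.mp this

variable {X : Type*} [MetricSpace X] [MeasurableSpace X] [BorelSpace X]

lemma ball_outside_bound {μ : Measure X} {Ω : Set X} {Cμ a : ℝ}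
    (hμ : ∀ x ∈ Ω, ∀ r : ℝ, 0 < r → μ (Metric.ball x r ∩ Ω) ≤ ENNReal.ofReal (Cμ * r ^ a))
    {S : Set X} (hS : S ⊆ Ω) (y : X) {ρ : ℝ} (hρ : 0 < ρ) :
    μ (S ∩ Metric.ball y ρ) ≤ ENNReal.ofReal (Cμ * 2 ^ a * ρ ^ a) := by
  rcases (S ∩ Metric.ball y ρ).eq_empty_or_nonempty with h | ⟨x₀, hx₀S, hx₀b⟩
  · simp [h]
  · have hsub : S ∩ Metric.ball y ρ ⊆ Metric.ball x₀ (2 * ρ) ∩ Ω := by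
      rintro x ⟨hxS, hxb⟩
      refine ⟨?_, hS hxS⟩
      have ht := dist_triangle x y x₀
      rw [Metric.mem_ball] at *
      rw [dist_comm y x₀] at ht
      linarith
    calc μ (S ∩ Metric.ball y ρ) ≤ μ (Metric.ball x₀ (2*ρ) ∩ Ω) := measure_mono hsub
      _ ≤ ENNReal.ofReal (Cμ * (2*ρ) ^ a) := hμ x₀ (hS hx₀S) _ (by positivity)
      _ = ENNReal.ofReal (Cμ * 2 ^ a * ρ ^ a) := by
          rw [Real.mul_rpow (by norm_num) hρ.le, mul_assoc]


lemma kernel_bound {μ : Measure X} {Ω : Set X} {Cμ a β : ℝ}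
    (hC : 0 < Cμ) (hβ : 0 < β) (hβa : β < a)
    (hμ : ∀ x ∈ Ω, ∀ r : ℝ, 0 < r → μ (Metric.ball x r ∩ Ω) ≤ ENNReal.ofReal (Cμ * r ^ a))
    {S : Set X} (hS : S ⊆ Ω) (hfin : μ S ≠ ⊤) (hpos : μ S ≠ 0)
    {y : X} (hy : y ∉ Ω) :
    ∫⁻ x in S, edist x y ^ (-β) ∂μ ≤
      ENNReal.ofReal ((Cμ + Cμ * 2 ^ a * 2 ^ β * (1 - 2 ^ (β - a))⁻¹) *
        (((μ S).toReal / Cμ) ^ a⁻¹) ^ (a - β)) := by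
  have ha : 0 < a := hβ.trans hβa
  set m' := (μ S).toReal with hm'def
  have hm' : 0 < m' := ENNReal.toReal_pos hpos hfin
  set r₀ := (m' / Cμ) ^ a⁻¹ with hr₀def
  have hr₀ : 0 < r₀ := Real.rpow_pos_of_pos (div_pos hm' hC) _
  have hr₀a : r₀ ^ a = m' / Cμ := by
    rw [hr₀def, ← Real.rpow_mul (div_pos hm' hC).le, inv_mul_cancel₀ ha.ne', Real.rpow_one]
  have hkey : Cμ * r₀ ^ (a - β) = r₀ ^ (-β) * m' := by
    rw [sub_eq_add_neg, Real.rpow_add hr₀, hr₀a]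
    field_simp
  -- dyadic pieces
  set w : ℝ := 2 ^ (β - a) with hwdef
  have hw0 : (0:ℝ) ≤ w := Real.rpow_nonneg (by norm_num) _
  have hw1 : w < 1 := Real.rpow_lt_one_of_one_lt_of_neg one_lt_two (by linarith)
  set c : ℝ := Cμ * 2 ^ a * 2 ^ β * r₀ ^ (a - β) with hcdef
  have hc0 : 0 ≤ c := by positivity
  set W : ℕ → Set X := fun j =>
    S ∩ (Metric.ball y (r₀ * 2 ^ (-(j:ℝ))) \ Metric.ball y (r₀ * 2 ^ (-(j:ℝ) - 1))) with hWdef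
  -- far part
  have far : ∫⁻ x in S \ Metric.ball y r₀, edist x y ^ (-β) ∂μ ≤
      ENNReal.ofReal (Cμ * r₀ ^ (a - β)) := by
    have hpt : ∀ x ∈ S \ Metric.ball y r₀, edist x y ^ (-β) ≤ ENNReal.ofReal r₀ ^ (-β) := by
      rintro x ⟨-, hxb⟩
      refine ennreal_rpow_anti hβ.le ?_
      rw [edist_dist]
      exact ENNReal.ofReal_le_ofReal (by simpa [Metric.mem_ball, not_lt] using hxb)
    calc ∫⁻ x in S \ Metric.ball y r₀, edist x y ^ (-β) ∂μ
        ≤ ∫⁻ _x in S \ Metric.ball y r₀, ENNReal.ofReal r₀ ^ (-β) ∂μ :=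
          setLIntegral_mono measurable_const hpt
      _ = ENNReal.ofReal r₀ ^ (-β) * μ (S \ Metric.ball y r₀) := setLIntegral_const _ _
      _ ≤ ENNReal.ofReal r₀ ^ (-β) * μ S := mul_le_mul_right (measure_mono diff_subset) _
      _ = ENNReal.ofReal (Cμ * r₀ ^ (a - β)) := by
          rw [ENNReal.ofReal_rpow_of_pos hr₀, hkey, ← ENNReal.ofReal_toReal hfin, ← hm'def,
            ← ENNReal.ofReal_mul (Real.rpow_nonneg hr₀.le _)]
  -- annuli
  have ann : ∀ j : ℕ, ∫⁻ x in W j, edist x y ^ (-β) ∂μ ≤ ENNReal.ofReal (c * w ^ j) := by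
    intro j
    have hρ' : 0 < r₀ * 2 ^ (-(j:ℝ) - 1) := by positivity
    have hρj : 0 < r₀ * 2 ^ (-(j:ℝ)) := by positivity
    have hpt : ∀ x ∈ W j, edist x y ^ (-β) ≤ ENNReal.ofReal (r₀ * 2 ^ (-(j:ℝ) - 1)) ^ (-β) := by
      rintro x ⟨-, -, hxb⟩
      refine ennreal_rpow_anti hβ.le ?_
      rw [edist_dist]
      exact ENNReal.ofReal_le_ofReal (by simpa [Metric.mem_ball, not_lt] using hxb)
    have hWsub : W j ⊆ S ∩ Metric.ball y (r₀ * 2 ^ (-(j:ℝ))) := fun x ⟨h1, h2, _⟩ => ⟨h1, h2⟩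
    have hid : (r₀ * 2 ^ (-(j:ℝ) - 1)) ^ (-β) * (Cμ * 2 ^ a * (r₀ * 2 ^ (-(j:ℝ))) ^ a)
        = c * w ^ j := by
      have e1 : (2:ℝ) ^ (β - a) = 2 ^ β * 2 ^ (-a) := by
        rw [← Real.rpow_add two_pos]; ring_nf
      have e2 : ((2:ℝ) ^ (-(j:ℝ) - 1)) ^ (-β) = 2 ^ β * ((2:ℝ) ^ β) ^ j := by
        rw [← Real.rpow_natCast ((2:ℝ) ^ β) j, ← Real.rpow_mul (by norm_num : (0:ℝ) ≤ 2),
          ← Real.rpow_mul (by norm_num : (0:ℝ) ≤ 2), ← Real.rpow_add two_pos]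
        congr 1; ring
      have e3 : ((2:ℝ) ^ (-(j:ℝ))) ^ a = ((2:ℝ) ^ (-a)) ^ j := by
        rw [← Real.rpow_natCast ((2:ℝ) ^ (-a)) j, ← Real.rpow_mul (by norm_num : (0:ℝ) ≤ 2),
          ← Real.rpow_mul (by norm_num : (0:ℝ) ≤ 2)]
        congr 1; ring
      have e4 : r₀ ^ (a - β) = r₀ ^ a * r₀ ^ (-β) := by
        rw [← Real.rpow_add hr₀, sub_eq_add_neg]
      rw [Real.mul_rpow hr₀.le (Real.rpow_nonneg (by norm_num) _),
        Real.mul_rpow hr₀.le (Real.rpow_nonneg (by norm_num) _), e2, e3, hcdef, hwdef, e1, e4,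
        mul_pow]
      ring
    calc ∫⁻ x in W j, edist x y ^ (-β) ∂μ
        ≤ ∫⁻ _x in W j, ENNReal.ofReal (r₀ * 2 ^ (-(j:ℝ) - 1)) ^ (-β) ∂μ :=
          setLIntegral_mono measurable_const hpt
      _ = ENNReal.ofReal (r₀ * 2 ^ (-(j:ℝ) - 1)) ^ (-β) * μ (W j) := setLIntegral_const _ _
      _ ≤ ENNReal.ofReal (r₀ * 2 ^ (-(j:ℝ) - 1)) ^ (-β)
            * ENNReal.ofReal (Cμ * 2 ^ a * (r₀ * 2 ^ (-(j:ℝ))) ^ a) := by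
          refine mul_le_mul_right ?_ _
          exact (measure_mono hWsub).trans (ball_outside_bound hμ hS y hρj)
      _ = ENNReal.ofReal (c * w ^ j) := by
          rw [ENNReal.ofReal_rpow_of_pos hρ', ← ENNReal.ofReal_mul (Real.rpow_nonneg hρ'.le _),
            hid]
  -- covering
  have hcover : S ∩ Metric.ball y r₀ ⊆ ⋃ j, W j := by
    rintro x ⟨hxS, hxb⟩
    have hxy : 0 < dist x y := by
      rw [dist_pos]
      rintro rfl
      exact hy (hS hxS)
    rw [Metric.mem_ball] at hxb
    obtain ⟨j, hj1, hj2⟩ := exists_dyadic hxy hxb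
    exact mem_iUnion.mpr ⟨j, hxS, by simpa [Metric.mem_ball] using hj2,
      by simp [Metric.mem_ball, not_lt, hj1]⟩
  -- sum
  have hsum : ∑' j, ∫⁻ x in W j, edist x y ^ (-β) ∂μ ≤ ENNReal.ofReal (c * (1 - w)⁻¹) := by
    calc ∑' j, ∫⁻ x in W j, edist x y ^ (-β) ∂μ ≤ ∑' j, ENNReal.ofReal (c * w ^ j) :=
          ENNReal.tsum_le_tsum ann
      _ = ENNReal.ofReal (∑' j : ℕ, c * w ^ j) :=
          (ENNReal.ofReal_tsum_of_nonneg (fun j => by positivity)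
            ((summable_geometric_of_lt_one hw0 hw1).mul_left c)).symm
      _ = ENNReal.ofReal (c * (1 - w)⁻¹) := by
          rw [tsum_mul_left, tsum_geometric_of_lt_one hw0 hw1]
  -- assemble
  calc ∫⁻ x in S, edist x y ^ (-β) ∂μ
      = ∫⁻ x in (S \ Metric.ball y r₀) ∪ (S ∩ Metric.ball y r₀), edist x y ^ (-β) ∂μ := by
        rw [diff_union_inter]
    _ ≤ ∫⁻ x in S \ Metric.ball y r₀, edist x y ^ (-β) ∂μ
          + ∫⁻ x in S ∩ Metric.ball y r₀, edist x y ^ (-β) ∂μ := lintegral_union_le _ _ _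
    _ ≤ ENNReal.ofReal (Cμ * r₀ ^ (a - β)) + ∑' j, ∫⁻ x in W j, edist x y ^ (-β) ∂μ := by
        refine add_le_add far ?_
        exact (lintegral_mono_set hcover).trans (lintegral_iUnion_le _ _)
    _ ≤ ENNReal.ofReal (Cμ * r₀ ^ (a - β)) + ENNReal.ofReal (c * (1 - w)⁻¹) :=
        add_le_add le_rfl hsum
    _ = ENNReal.ofReal ((Cμ + Cμ * 2 ^ a * 2 ^ β * (1 - w)⁻¹) * r₀ ^ (a - β)) := by
        have h1w : (0:ℝ) < 1 - w := by linarith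
        rw [← ENNReal.ofReal_add (by positivity) (mul_nonneg hc0 (inv_nonneg.mpr h1w.le))]
        congr 1
        rw [hcdef]
        ring


variable [SecondCountableTopology X]

lemma construct_h {ν : Measure X} {Ω : Set X} {g : X → ℝ} {β t : ℝ} (hβ : 0 < β)
    (hν0 : ∀ x ∈ Ω, ν {x} = 0) :
    ∃ h : X → ℝ≥0∞, Measurable h ∧ (∀ y, h y ≤ (‖g y‖₊ : ℝ≥0∞)) ∧
      ∀ z, z ∈ Ω → ENNReal.ofReal t < ∫⁻ y, (‖g y‖₊ : ℝ≥0∞) * edist z y ^ (-β) ∂ν →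
        ENNReal.ofReal t < (2:ℝ≥0∞) ^ β * ∫⁻ y, h y * edist z y ^ (-β) ∂ν := by
  classical
  set T := ENNReal.ofReal t with hT
  set E : Set X := {x | x ∈ Ω ∧ T < ∫⁻ y, (‖g y‖₊ : ℝ≥0∞) * edist x y ^ (-β) ∂ν} with hE
  have hP : ∀ x : E, ∃ ρ : ℝ, 0 < ρ ∧ ∃ ψ : X → ℝ≥0∞, Measurable ψ ∧
      (∀ y, ψ y ≤ (‖g y‖₊ : ℝ≥0∞)) ∧
      ∀ z ∈ Metric.ball (x : X) ρ, T < (2:ℝ≥0∞) ^ β * ∫⁻ y, ψ y * edist z y ^ (-β) ∂ν := by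
    rintro ⟨x, hxΩ, hxE⟩
    obtain ⟨u, hu_meas, hu_le, hu_eq⟩ :=
      exists_measurable_le_lintegral_eq ν (fun y => (‖g y‖₊ : ℝ≥0∞) * edist x y ^ (-β))
    rw [hu_eq] at hxE
    -- truncate away from x
    set uk : ℕ → X → ℝ≥0∞ := fun k => (Metric.ball x (1/(k+1)))ᶜ.indicator u with huk
    have hukmeas : ∀ k, Measurable (uk k) := fun k =>
      (hu_meas.indicator Metric.isOpen_ball.measurableSet.compl)
    have hukmono : Monotone uk := by
      intro k l hkl y
      simp only [huk, indicator]
      split_ifs with h1 h2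
      · exact le_rfl
      · exfalso
        apply h2
        intro hmem
        apply h1
        rw [Metric.mem_ball] at *
        have : (1:ℝ)/(l+1) ≤ 1/(k+1) := by
          apply one_div_le_one_div_of_le (by positivity)
          push_cast
          have : (k:ℝ) ≤ l := Nat.cast_le.mpr hkl
          linarith
        linarith
      · exact zero_le
      · exact le_rfl
    have hsup : ∀ y, (⨆ k, uk k y) = ({x}ᶜ : Set X).indicator u y := by
      intro y
      by_cases hyx : y = x
      · subst hyx
        have hind : ({y}ᶜ : Set X).indicator u y = 0 :=
          indicator_of_notMem (by simp) u
        rw [hind]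
        refine le_antisymm (iSup_le fun k => ?_) (zero_le)
        have hmem : y ∈ Metric.ball y (1/(k+1)) := Metric.mem_ball_self (by positivity)
        exact le_of_eq (indicator_of_notMem (notMem_compl_iff.mpr hmem) u)
      · have hd : 0 < dist y x := dist_pos.mpr hyx
        have hind : ({x}ᶜ : Set X).indicator u y = u y := indicator_of_mem (by simpa) u
        rw [hind]
        obtain ⟨k, hk⟩ := exists_nat_one_div_lt hd
        refine le_antisymm (iSup_le fun l => indicator_le_self _ _ y) ?_
        have huky : uk k y = u y := by
          refine indicator_of_mem ?_ u
          simp only [mem_compl_iff, Metric.mem_ball, not_lt]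
          push_cast
          linarith
        calc u y = uk k y := huky.symm
          _ ≤ ⨆ k, uk k y := le_iSup (fun k => uk k y) k
    have hlim : (⨆ k, ∫⁻ y, uk k y ∂ν) = ∫⁻ y, u y ∂ν := by
      rw [← lintegral_iSup hukmeas hukmono]
      have : ∀ y, (⨆ k, uk k y) = ({x}ᶜ : Set X).indicator u y := hsup
      calc ∫⁻ y, ⨆ k, uk k y ∂ν = ∫⁻ y, ({x}ᶜ : Set X).indicator u y ∂ν := by
            simp_rw [this]
        _ = ∫⁻ y in {x}ᶜ, u y ∂ν := lintegral_indicator (measurableSet_singleton x).compl u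
        _ = ∫⁻ y, u y ∂ν := by
            have hzero : ∫⁻ y in ({x} : Set X), u y ∂ν = 0 :=
              setLIntegral_measure_zero _ _ (hν0 x hxΩ)
            rw [← lintegral_add_compl (μ := ν) u (measurableSet_singleton x), hzero, zero_add]
    have : ∃ k, T < ∫⁻ y, uk k y ∂ν := by
      rw [← lt_iSup_iff, hlim]
      exact hxE
    obtain ⟨k, hk⟩ := this
    set ρ : ℝ := 1/(k+1) with hρdef
    have hρ : 0 < ρ := by positivity
    set u' : X → ℝ≥0∞ := (Metric.ball x ρ)ᶜ.indicator u with hu'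
    set ψ : X → ℝ≥0∞ := fun y => u' y * (edist x y ^ (-β))⁻¹ with hψ
    have hψmeas : Measurable ψ :=
      ((hu_meas.indicator Metric.isOpen_ball.measurableSet.compl).mul
        ((ENNReal.continuous_rpow_const.measurable.comp (measurable_edist_right)).inv))
    have hedist : ∀ y, y ∉ Metric.ball x ρ →
        edist x y ^ (-β) ≠ 0 ∧ edist x y ^ (-β) ≠ ⊤ ∧ edist x y ≠ 0 := by
      intro y hyb
      rw [Metric.mem_ball, not_lt] at hyb
      have h0 : edist x y ≠ 0 := by
        rw [edist_dist]
        simp only [Ne, ENNReal.ofReal_eq_zero, not_le]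
        rw [dist_comm]
        linarith
      have htop : edist x y ≠ ⊤ := edist_ne_top x y
      refine ⟨?_, ?_, h0⟩
      · intro hc
        rcases ENNReal.rpow_eq_zero_iff.mp hc with ⟨h, -⟩ | ⟨h, -⟩
        exacts [h0 h, htop h]
      · intro hc
        rcases ENNReal.rpow_eq_top_iff.mp hc with ⟨h, -⟩ | ⟨h, -⟩
        exacts [h0 h, htop h]
    have hψle : ∀ y, ψ y ≤ (‖g y‖₊ : ℝ≥0∞) := by
      intro y
      by_cases hyb : y ∈ Metric.ball x ρ
      · have h0 : u' y = 0 := indicator_of_notMem (notMem_compl_iff.mpr hyb) u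
        simp [hψ, h0]
      · obtain ⟨hk0, hktop, -⟩ := hedist y hyb
        have hu'y : u' y = u y := indicator_of_mem (mem_compl hyb) u
        calc ψ y = u y * (edist x y ^ (-β))⁻¹ := by simp only [hψ]; rw [hu'y]
          _ ≤ ((‖g y‖₊ : ℝ≥0∞) * edist x y ^ (-β)) * (edist x y ^ (-β))⁻¹ :=
              mul_le_mul_left (hu_le y) _
          _ = (‖g y‖₊ : ℝ≥0∞) * (edist x y ^ (-β) * (edist x y ^ (-β))⁻¹) := mul_assoc _ _ _
          _ = (‖g y‖₊ : ℝ≥0∞) := by rw [ENNReal.mul_inv_cancel hk0 hktop, mul_one]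
    refine ⟨ρ, hρ, ψ, hψmeas, hψle, ?_⟩
    intro z hzb
    have hcancel : (2:ℝ≥0∞) ^ β * (2:ℝ≥0∞) ^ (-β) = 1 := by
      rw [← ENNReal.rpow_add β (-β) (by norm_num) (by norm_num)]
      simp
    have hpt : ∀ y, u' y ≤ (2:ℝ≥0∞) ^ β * (ψ y * edist z y ^ (-β)) := by
      intro y
      by_cases hyb : y ∈ Metric.ball x ρ
      · have h0 : u' y = 0 := indicator_of_notMem (notMem_compl_iff.mpr hyb) u
        rw [h0]
        exact zero_le
      · obtain ⟨hk0, hktop, hxy0⟩ := hedist y hyb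
        have hzy : edist z y ≤ 2 * edist x y := by
          have h1 : edist z x ≤ edist x y := by
            have hzx : edist z x < ENNReal.ofReal ρ :=
              edist_lt_ofReal.mpr (by rwa [Metric.mem_ball] at hzb)
            have hxyρ : ENNReal.ofReal ρ ≤ edist x y := by
              rw [edist_dist]
              apply ENNReal.ofReal_le_ofReal
              rw [Metric.mem_ball, not_lt] at hyb
              rw [dist_comm]
              exact hyb
            exact (hzx.trans_le hxyρ).le
          calc edist z y ≤ edist z x + edist x y := edist_triangle z x y
            _ ≤ edist x y + edist x y := add_le_add_left h1 _
            _ = 2 * edist x y := (two_mul _).symm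
        have hkz : (2:ℝ≥0∞) ^ (-β) * edist x y ^ (-β) ≤ edist z y ^ (-β) := by
          rw [← ENNReal.mul_rpow_of_ne_zero (by norm_num) hxy0]
          exact ennreal_rpow_anti hβ.le hzy
        have hcancel2 : (edist x y ^ (-β))⁻¹ * edist x y ^ (-β) = 1 :=
          ENNReal.inv_mul_cancel hk0 hktop
        calc u' y
            = (2:ℝ≥0∞) ^ β * (ψ y * ((2:ℝ≥0∞) ^ (-β) * edist x y ^ (-β))) := by
              simp only [hψ]
              rw [show (2:ℝ≥0∞) ^ β * (u' y * (edist x y ^ (-β))⁻¹ *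
                  ((2:ℝ≥0∞) ^ (-β) * edist x y ^ (-β)))
                  = ((2:ℝ≥0∞) ^ β * (2:ℝ≥0∞) ^ (-β)) *
                    ((edist x y ^ (-β))⁻¹ * edist x y ^ (-β)) * u' y from by ring,
                hcancel, hcancel2, one_mul, one_mul]
          _ ≤ (2:ℝ≥0∞) ^ β * (ψ y * edist z y ^ (-β)) :=
              mul_le_mul_right (mul_le_mul_right hkz _) _
    have hmeaszy : Measurable fun y => ψ y * edist z y ^ (-β) :=
      hψmeas.mul (ENNReal.continuous_rpow_const.measurable.comp (measurable_edist_right))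
    have hint : ∫⁻ y, u' y ∂ν ≤ (2:ℝ≥0∞) ^ β * ∫⁻ y, ψ y * edist z y ^ (-β) ∂ν := by
      calc ∫⁻ y, u' y ∂ν ≤ ∫⁻ y, (2:ℝ≥0∞) ^ β * (ψ y * edist z y ^ (-β)) ∂ν :=
            lintegral_mono hpt
        _ = (2:ℝ≥0∞) ^ β * ∫⁻ y, ψ y * edist z y ^ (-β) ∂ν :=
            lintegral_const_mul _ hmeaszy
    exact lt_of_lt_of_le hk hint
  -- Lindelöf and supremum
  choose ρ hρ ψ hψmeas hψle hψkey using hP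
  obtain ⟨Tset, hTc, hTeq⟩ :=
    TopologicalSpace.isOpen_iUnion_countable (fun i : E => Metric.ball (i : X) (ρ i))
      (fun _ => Metric.isOpen_ball)
  haveI := hTc.to_subtype
  refine ⟨fun y => ⨆ i : Tset, ψ i.1 y, Measurable.iSup (fun i => hψmeas i.1), ?_, ?_⟩
  · intro y
    exact iSup_le fun i => hψle i.1 y
  · intro z hzΩ hzlt
    have hzE : z ∈ E := ⟨hzΩ, hzlt⟩
    have hzU : z ∈ ⋃ i ∈ Tset, Metric.ball (i : X) (ρ i) := by
      rw [hTeq]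
      exact mem_iUnion.mpr ⟨⟨z, hzE⟩, Metric.mem_ball_self (hρ _)⟩
    obtain ⟨i, hiT, hzb⟩ := mem_iUnion₂.mp hzU
    refine lt_of_lt_of_le (hψkey i z hzb) ?_
    refine mul_le_mul_right (lintegral_mono fun y => ?_) _
    exact mul_le_mul_left (le_iSup (fun j : Tset => ψ j.1 y) ⟨i, hiT⟩) _


end WeakTypeAux

/-- Weak-type estimate for the boundary potential
N_γ g(x) = ∫_{∂Ω} g(y)|x−y|^{γ−n} dH^{n−1}(y) with respect to a measure μ
satisfying μ(B_r ∩ Ω) ≤ C_μ r^α, α ∈ (n−γ, n]: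
t · μ({N_γ|g| > t})^{(n−γ)/α} ≤ C ‖g‖_{L¹(∂Ω)}. -/
theorem stmt10 {n : ℕ} (hn : 2 ≤ n) (Ω : Set (EuclideanSpace ℝ (Fin n))) (hΩ : IsOpen Ω)
    (γ : ℝ) (hγ0 : 0 < γ) (hγn : γ < n)
    (α : ℝ) (hα1 : (n:ℝ) - γ < α) (hα2 : α ≤ n)
    (μ : Measure (EuclideanSpace ℝ (Fin n))) (Cμ : ℝ) (hCμ : 0 < Cμ)
    (hμ : ∀ x ∈ Ω, ∀ r : ℝ, 0 < r → μ (Metric.ball x r ∩ Ω) ≤ ENNReal.ofReal (Cμ * r ^ α)) :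
    ∃ C : ℝ, 0 < C ∧ ∀ g : EuclideanSpace ℝ (Fin n) → ℝ,
      (∫⁻ y in frontier Ω, (‖g y‖₊ : ℝ≥0∞) ∂μH[(n:ℝ) - 1]) < ⊤ →
      ∀ t : ℝ, 0 < t →
        ENNReal.ofReal t *
          (μ {x | x ∈ Ω ∧ ENNReal.ofReal t <
              ∫⁻ y in frontier Ω,
                (‖g y‖₊ : ℝ≥0∞) * edist x y ^ (-((n:ℝ) - γ)) ∂μH[(n:ℝ) - 1]})
            ^ (((n:ℝ) - γ)/α)
        ≤ ENNReal.ofReal C * ∫⁻ y in frontier Ω, (‖g y‖₊ : ℝ≥0∞) ∂μH[(n:ℝ) - 1] := by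
  classical
  set β : ℝ := (n:ℝ) - γ with hβdef
  have hβ : 0 < β := by rw [hβdef]; linarith
  have hβα : β < α := hα1
  have hα0 : 0 < α := hβ.trans hβα
  set θ : ℝ := β / α with hθdef
  have hθ : 0 < θ := div_pos hβ hα0
  set w : ℝ := 2 ^ (β - α) with hwdef
  have hw1 : w < 1 := Real.rpow_lt_one_of_one_lt_of_neg one_lt_two (by linarith)
  have hw0 : (0:ℝ) ≤ w := Real.rpow_nonneg (by norm_num) _
  have h1w : (0:ℝ) < 1 - w := by linarith
  set D : ℝ := Cμ + Cμ * 2 ^ α * 2 ^ β * (1 - w)⁻¹ with hDdef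
  have hD0 : 0 < D := by positivity
  set C : ℝ := Cμ ^ (θ - 1) * 2 ^ β * D with hCdef
  have hC0 : 0 < C := by positivity
  refine ⟨C, hC0, ?_⟩
  intro g hg t ht
  set ν : Measure (EuclideanSpace ℝ (Fin n)) := (μH[(n:ℝ) - 1]).restrict (frontier Ω) with hνdef
  set T : ℝ≥0∞ := ENNReal.ofReal t with hTdef
  have hT0 : T ≠ 0 := (ENNReal.ofReal_pos.mpr ht).ne'
  have hTtop : T ≠ ⊤ := ENNReal.ofReal_ne_top
  set Itot : ℝ≥0∞ := ∫⁻ y, (‖g y‖₊ : ℝ≥0∞) ∂ν with hItot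
  have hItottop : Itot ≠ ⊤ := hg.ne
  -- singletons of Ω are ν-null
  have hfrΩ : ∀ y ∈ frontier Ω, y ∉ Ω := by
    intro y hy
    rw [hΩ.frontier_eq] at hy
    exact hy.2
  have hν0 : ∀ x ∈ Ω, ν {x} = 0 := by
    intro x hx
    rw [hνdef, Measure.restrict_apply (measurableSet_singleton x)]
    have : ({x} : Set (EuclideanSpace ℝ (Fin n))) ∩ frontier Ω = ∅ := by
      apply eq_empty_of_forall_notMem
      rintro y ⟨rfl, hyF⟩
      · exact hfrΩ _ hyF hx
    rw [this, measure_empty]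
  obtain ⟨h, hmeas, hle, hkey⟩ := construct_h (ν := ν) (Ω := Ω) (g := g) (t := t) hβ hν0
  have hIh : ∫⁻ y, h y ∂ν ≤ Itot := lintegral_mono fun y => hle y
  -- restrict to the support of h
  set A : Set (EuclideanSpace ℝ (Fin n)) := {y | h y ≠ 0} with hAdef
  have hA : MeasurableSet A := hmeas (measurableSet_singleton 0).compl
  set ν' : Measure (EuclideanSpace ℝ (Fin n)) := ν.restrict A with hν'def
  have hNrestrict : ∀ z : EuclideanSpace ℝ (Fin n), ∫⁻ y, h y * edist z y ^ (-β) ∂ν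
      = ∫⁻ y, h y * edist z y ^ (-β) ∂ν' := by
    intro z
    rw [hν'def, ← lintegral_indicator hA]
    refine lintegral_congr fun y => ?_
    by_cases hy : y ∈ A
    · rw [indicator_of_mem hy]
    · rw [indicator_of_notMem hy]
      have : h y = 0 := by simpa [hAdef] using hy
      rw [this, zero_mul]
  haveI hsf : SigmaFinite ν' := by
    refine ⟨⟨⟨fun m => {y | ((m:ℝ≥0∞)+1)⁻¹ ≤ h y} ∪ Aᶜ, fun _ => trivial, fun m => ?_, ?_⟩⟩⟩
    · rw [hν'def, Measure.restrict_apply' hA]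
      have hsub : ({y | ((m:ℝ≥0∞)+1)⁻¹ ≤ h y} ∪ Aᶜ) ∩ A ⊆ {y | ((m:ℝ≥0∞)+1)⁻¹ ≤ h y} := by
        rintro y ⟨hy1 | hy2, hyA⟩
        · exact hy1
        · exact absurd hyA hy2
      refine lt_of_le_of_lt (measure_mono hsub) ?_
      have hmark := mul_meas_ge_le_lintegral₀ (hmeas.aemeasurable (μ := ν)) ((m:ℝ≥0∞)+1)⁻¹
      rw [lt_top_iff_ne_top]
      intro heq
      rw [heq] at hmark
      have hne : ((m:ℝ≥0∞)+1)⁻¹ ≠ 0 := by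
        simp [ENNReal.inv_ne_zero]
      rw [ENNReal.mul_top hne] at hmark
      exact hItottop (top_le_iff.mp (hmark.trans hIh))
    · apply eq_univ_iff_forall.mpr
      intro y
      by_cases hy : h y = 0
      · exact mem_iUnion.mpr ⟨0, Or.inr (by simp [hAdef, hy])⟩
      · obtain ⟨m, hm⟩ := ENNReal.exists_inv_nat_lt hy
        refine mem_iUnion.mpr ⟨m, Or.inl ?_⟩
        have : ((m:ℝ≥0∞)+1)⁻¹ ≤ ((m:ℝ≥0∞))⁻¹ := ENNReal.inv_le_inv.mpr le_self_add
        exact this.trans hm.le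
  -- the enlarged superlevel set
  set N : EuclideanSpace ℝ (Fin n) → ℝ≥0∞ := fun x => ∫⁻ y, h y * edist x y ^ (-β) ∂ν' with hNdef
  have hNmeas : Measurable N := by
    apply Measurable.lintegral_prod_right' (f := fun p : (EuclideanSpace ℝ (Fin n)) × (EuclideanSpace ℝ (Fin n)) => h p.2 * edist p.1 p.2 ^ (-β))
    exact (hmeas.comp measurable_snd).mul
      (ENNReal.continuous_rpow_const.measurable.comp measurable_edist)
  set Ehat : Set (EuclideanSpace ℝ (Fin n)) := {x | x ∈ Ω ∧ T < (2:ℝ≥0∞) ^ β * N x} with hEhat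
  have hEhatmeas : MeasurableSet Ehat := by
    have : Ehat = Ω ∩ (fun x => (2:ℝ≥0∞) ^ β * N x) ⁻¹' (Ioi T) := by
      ext x; simp [hEhat, mem_preimage]
    rw [this]
    exact hΩ.measurableSet.inter ((hNmeas.const_mul _) measurableSet_Ioi)
  have hEhatΩ : Ehat ⊆ Ω := fun x hx => hx.1
  -- the key estimate for finite-measure pieces
  have key : ∀ S : Set (EuclideanSpace ℝ (Fin n)), S ⊆ Ehat → μ S ≠ ⊤ →
      T * (μ S) ^ θ ≤ ENNReal.ofReal C * Itot := by
    intro S hsub hfin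
    rcases eq_or_ne (μ S) 0 with hpos | hpos
    · rw [hpos, ENNReal.zero_rpow_of_pos hθ, mul_zero]
      exact zero_le
    have hSΩ : S ⊆ Ω := hsub.trans hEhatΩ
    haveI : IsFiniteMeasure (μ.restrict S) :=
      ⟨by rw [Measure.restrict_apply_univ]; exact hfin.lt_top⟩
    set m' : ℝ := (μ S).toReal with hm'def
    have hm' : 0 < m' := ENNReal.toReal_pos hpos hfin
    set r₀ : ℝ := (m' / Cμ) ^ α⁻¹ with hr₀def
    have hr₀ : 0 < r₀ := Real.rpow_pos_of_pos (div_pos hm' hCμ) _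
    have hr₀α : Cμ * r₀ ^ α = m' := by
      rw [hr₀def, ← Real.rpow_mul (div_pos hm' hCμ).le, inv_mul_cancel₀ hα0.ne',
        Real.rpow_one, mul_div_cancel₀ _ hCμ.ne']
    -- kernel measurability on the product
    have hkernmeas : Measurable (Function.uncurry fun (x y : EuclideanSpace ℝ (Fin n))
        => h y * edist x y ^ (-β)) :=
      (hmeas.comp measurable_snd).mul
        (ENNReal.continuous_rpow_const.measurable.comp measurable_edist)
    -- Chebyshev
    have cheb : T * μ S ≤ (2:ℝ≥0∞) ^ β * ∫⁻ x in S, N x ∂μ := by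
      calc T * μ S = ∫⁻ _x in S, T ∂μ := (setLIntegral_const S T).symm
        _ ≤ ∫⁻ x in S, (2:ℝ≥0∞) ^ β * N x ∂μ :=
            setLIntegral_mono (hNmeas.const_mul _) fun x hx => ((hsub hx).2).le
        _ = (2:ℝ≥0∞) ^ β * ∫⁻ x in S, N x ∂μ := lintegral_const_mul _ hNmeas
    -- swap
    have swap : ∫⁻ x in S, N x ∂μ
        = ∫⁻ y, h y * (∫⁻ x in S, edist x y ^ (-β) ∂μ) ∂ν' := by
      rw [show ∫⁻ x in S, N x ∂μ
          = ∫⁻ x, (∫⁻ y, h y * edist x y ^ (-β) ∂ν') ∂(μ.restrict S) from rfl,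
        lintegral_lintegral_swap hkernmeas.aemeasurable]
      refine lintegral_congr fun y => ?_
      exact lintegral_const_mul _
        (ENNReal.continuous_rpow_const.measurable.comp (measurable_edist_left))
    -- kernel bound
    set Bd : ℝ≥0∞ := ENNReal.ofReal (D * r₀ ^ (α - β)) with hBd
    have hKS : ∫⁻ y, h y * (∫⁻ x in S, edist x y ^ (-β) ∂μ) ∂ν'
        ≤ Itot * Bd := by
      have hfront : ∀ᵐ y ∂ν', y ∈ frontier Ω := by
        rw [hν'def, hνdef]
        exact ae_restrict_of_ae (ae_restrict_mem isClosed_frontier.measurableSet)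
      calc ∫⁻ y, h y * (∫⁻ x in S, edist x y ^ (-β) ∂μ) ∂ν'
          ≤ ∫⁻ y, h y * Bd ∂ν' := by
            refine lintegral_mono_ae ?_
            filter_upwards [hfront] with y hyF
            refine mul_le_mul_right ?_ _
            exact kernel_bound hCμ hβ hβα hμ hSΩ hfin hpos (hfrΩ y hyF)
        _ = (∫⁻ y, h y ∂ν') * Bd := lintegral_mul_const _ hmeas
        _ ≤ Itot * Bd := by
            refine mul_le_mul_left ?_ _
            exact (setLIntegral_le_lintegral _ _).trans hIh
    -- combine
    have main : T * μ S ≤ (2:ℝ≥0∞) ^ β * (Itot * Bd) := by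
      refine cheb.trans ?_
      rw [swap]
      exact mul_le_mul_right hKS _
    -- algebra
    have h2of : (2:ℝ≥0∞) ^ β = ENNReal.ofReal (2 ^ β) := by
      rw [← ENNReal.ofReal_rpow_of_pos two_pos]
      norm_num
    have hr₀split : r₀ ^ α = r₀ ^ β * r₀ ^ (α - β) := by
      rw [← Real.rpow_add hr₀]
      congr 1
      ring
    have hμS : μ S = ENNReal.ofReal m' := (ENNReal.ofReal_toReal hfin).symm
    have ha : T * ENNReal.ofReal Cμ * ENNReal.ofReal (r₀ ^ β)
        ≤ (2:ℝ≥0∞) ^ β * Itot * ENNReal.ofReal D := by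
      refine (ENNReal.mul_le_mul_iff_left (c := ENNReal.ofReal (r₀ ^ (α - β)))
        (by simp only [Ne, ENNReal.ofReal_eq_zero, not_le]; positivity)
        ENNReal.ofReal_ne_top).mp ?_
      have e : T * μ S = T * ENNReal.ofReal Cμ * ENNReal.ofReal (r₀ ^ β)
          * ENNReal.ofReal (r₀ ^ (α - β)) := by
        rw [hμS, ← hr₀α, hr₀split, ENNReal.ofReal_mul hCμ.le,
          ENNReal.ofReal_mul (Real.rpow_nonneg hr₀.le _)]
        ring
      calc T * ENNReal.ofReal Cμ * ENNReal.ofReal (r₀ ^ β) * ENNReal.ofReal (r₀ ^ (α - β))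
          = T * μ S := e.symm
        _ ≤ (2:ℝ≥0∞) ^ β * (Itot * Bd) := main
        _ = (2:ℝ≥0∞) ^ β * Itot * ENNReal.ofReal D * ENNReal.ofReal (r₀ ^ (α - β)) := by
            rw [hBd, ENNReal.ofReal_mul hD0.le]
            ring
    have hm'θ : m' ^ θ = Cμ ^ (θ - 1) * Cμ * r₀ ^ β := by
      rw [← hr₀α, Real.mul_rpow hCμ.le (Real.rpow_nonneg hr₀.le _), ← Real.rpow_mul hr₀.le]
      rw [show α * θ = β from by rw [hθdef]; field_simp]
      rw [show Cμ ^ θ = Cμ ^ (θ - 1) * Cμ from by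
        rw [← Real.rpow_add_one hCμ.ne' (θ - 1), sub_add_cancel]]
    have hμSθ : (μ S) ^ θ
        = ENNReal.ofReal (Cμ ^ (θ - 1)) * ENNReal.ofReal Cμ * ENNReal.ofReal (r₀ ^ β) := by
      rw [hμS, ENNReal.ofReal_rpow_of_pos hm', hm'θ, ENNReal.ofReal_mul (by positivity),
        ENNReal.ofReal_mul (by positivity)]
    have h2of : (2:ℝ≥0∞) ^ β = ENNReal.ofReal (2 ^ β) := by
      rw [← ENNReal.ofReal_rpow_of_pos two_pos]
      norm_num
    calc T * (μ S) ^ θ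
        = ENNReal.ofReal (Cμ ^ (θ - 1)) * (T * ENNReal.ofReal Cμ * ENNReal.ofReal (r₀ ^ β)) := by
          rw [hμSθ]
          ring
      _ ≤ ENNReal.ofReal (Cμ ^ (θ - 1)) * ((2:ℝ≥0∞) ^ β * Itot * ENNReal.ofReal D) :=
          mul_le_mul_right ha _
      _ = ENNReal.ofReal C * Itot := by
          rw [h2of, hCdef, ENNReal.ofReal_mul (by positivity),
            ENNReal.ofReal_mul (by positivity)]
          ring
  -- conclusion
  have hEsub : {x | x ∈ Ω ∧ T < ∫⁻ y, (‖g y‖₊ : ℝ≥0∞) * edist x y ^ (-β) ∂ν} ⊆ Ehat := by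
    rintro x ⟨hxΩ, hxlt⟩
    refine ⟨hxΩ, ?_⟩
    have hx2 := hkey x hxΩ hxlt
    rw [hNrestrict x] at hx2
    simpa [hNdef] using hx2
  set Sk : ℕ → Set (EuclideanSpace ℝ (Fin n)) := fun k => Ehat ∩ Metric.ball 0 (k+1) with hSk
  have hSkmono : Monotone Sk := by
    intro a b hab
    refine inter_subset_inter_right _ (Metric.ball_subset_ball ?_)
    have : (a:ℝ) ≤ b := Nat.cast_le.mpr hab
    linarith
  have hSkU : ⋃ k, Sk k = Ehat := by
    apply Subset.antisymm (iUnion_subset fun k => inter_subset_left)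
    intro x hx
    obtain ⟨k, hk⟩ := exists_nat_gt (dist x 0)
    exact mem_iUnion.mpr ⟨k, hx, by rw [Metric.mem_ball]; push_cast; linarith⟩
  have hSkfin : ∀ k, μ (Sk k) ≠ ⊤ := fun k =>
    ne_top_of_le_ne_top ENNReal.ofReal_ne_top
      (ball_outside_bound hμ hEhatΩ (0:EuclideanSpace ℝ (Fin n))
        (ρ := (k:ℝ)+1) (by positivity))
  have hEhatμ : μ Ehat = ⨆ k, μ (Sk k) := by
    rw [← hSkU]
    exact hSkmono.measure_iUnion
  have hQ : ∀ k, μ (Sk k) ≤ (ENNReal.ofReal C * Itot / T) ^ θ⁻¹ := by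
    intro k
    have h1 : (μ (Sk k)) ^ θ ≤ ENNReal.ofReal C * Itot / T := by
      rw [ENNReal.le_div_iff_mul_le (Or.inl hT0) (Or.inl hTtop)]
      calc (μ (Sk k)) ^ θ * T = T * (μ (Sk k)) ^ θ := mul_comm _ _
        _ ≤ ENNReal.ofReal C * Itot := key _ inter_subset_left (hSkfin k)
    calc μ (Sk k) = ((μ (Sk k)) ^ θ) ^ θ⁻¹ := by
          rw [← ENNReal.rpow_mul, mul_inv_cancel₀ hθ.ne', ENNReal.rpow_one]
      _ ≤ (ENNReal.ofReal C * Itot / T) ^ θ⁻¹ :=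
          ENNReal.rpow_le_rpow h1 (by positivity)
  have hEQ : μ Ehat ≤ (ENNReal.ofReal C * Itot / T) ^ θ⁻¹ := by
    rw [hEhatμ]
    exact iSup_le hQ
  calc T * (μ {x | x ∈ Ω ∧ T < ∫⁻ y, (‖g y‖₊ : ℝ≥0∞) * edist x y ^ (-β) ∂ν}) ^ θ
      ≤ T * ((ENNReal.ofReal C * Itot / T) ^ θ⁻¹) ^ θ :=
        mul_le_mul_right
          (ENNReal.rpow_le_rpow ((measure_mono hEsub).trans hEQ) hθ.le) _
    _ = T * (ENNReal.ofReal C * Itot / T) := by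
        rw [← ENNReal.rpow_mul, inv_mul_cancel₀ hθ.ne', ENNReal.rpow_one]
    _ ≤ ENNReal.ofReal C * Itot := ENNReal.mul_div_le
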